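/- Let R be a commutative Noetherian ring that is indecomposable as a module over itself, and let I, J ⊊ R be proper ideals such that √(I ∩ J) = √0 (the nilradical), but √I ≠ √0 and √J ≠ √0. Then depth(I + J, R) ≤ 1. -/
import Mathlib


open scoped Classical

/-- The depth of the `R`-module `M` along the ideal `I`: the supremum of lengths of
`M`-regular sequences contained in `I`, with the convention that it is `⊤` if `IM = M`. -/
noncomputable def Ideal.depthENat {R : Type*} [CommRing R] (I : Ideal R)
    (M : Type*) [AddCommGroup M] [Module R M] : ℕ∞ :=
  if I • (⊤ : Submodule R M) = ⊤ then ⊤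
  else sSup {n : ℕ∞ | ∃ rs : List R, (∀ r ∈ rs, r ∈ I) ∧
      RingTheory.Sequence.IsRegular M rs ∧ (rs.length : ℕ∞) = n}

/-- The height of an ideal: the infimum of the heights of the primes minimal over it. -/
noncomputable def Ideal.heightENat {R : Type*} [CommRing R] (I : Ideal R) : ℕ∞ :=
  sInf {n : ℕ∞ | ∃ p : PrimeSpectrum R, p.asIdeal ∈ I.minimalPrimes ∧ Order.height p = n}

open scoped Pointwise

section Aux

variable {R : Type u} [CommRing R]

/-- In an indecomposable ring, idempotents are trivial. -/
lemma aux_idem (hind : ∀ A B : Submodule R R, IsCompl A B → A = ⊥ ∨ B = ⊥)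
    {s : R} (hs : s * s = s) : s = 0 ∨ s = 1 := by
  have hcompl : IsCompl (Ideal.span {s} : Submodule R R) (Ideal.span {1 - s}) := by
    apply IsCompl.of_eq
    · rw [eq_bot_iff]
      intro x hx
      obtain ⟨hx1, hx2⟩ := Submodule.mem_inf.mp hx
      obtain ⟨u, hu⟩ := Ideal.mem_span_singleton'.mp hx1
      obtain ⟨v, hv⟩ := Ideal.mem_span_singleton'.mp hx2
      have h1 : x * s = x := by linear_combination u * hs - s * hu + hu
      have h2 : x * s = 0 := by linear_combination (-s) * hv - v * hs
      exact (Submodule.mem_bot R).mpr (by rw [← h2, h1])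
    · rw [eq_top_iff]
      intro x _
      have hx : x = x * s + x * (1 - s) := by ring
      rw [hx]
      exact Submodule.add_mem _
        (Submodule.mem_sup_left (Ideal.mem_span_singleton'.mpr ⟨x, rfl⟩))
        (Submodule.mem_sup_right (Ideal.mem_span_singleton'.mpr ⟨x, rfl⟩))
  rcases hind _ _ hcompl with h | h
  · left
    have hm : s ∈ (Ideal.span {s} : Ideal R) := Ideal.mem_span_singleton_self s
    rw [h] at hm
    simpa using hm
  · right
    have hm : (1 - s) ∈ (Ideal.span {1 - s} : Ideal R) := Ideal.mem_span_singleton_self _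
    rw [h] at hm
    have h0 : 1 - s = 0 := by simpa using hm
    linear_combination -h0

/-- Powers of a nonzerodivisor are nonzerodivisors. -/
lemma aux_reg_pow {a : R} (ha : ∀ x : R, a * x = 0 → x = 0) :
    ∀ (m : ℕ) (x : R), a ^ m * x = 0 → x = 0 := by
  intro m
  induction m with
  | zero => intro x hx; simpa using hx
  | succ n ih =>
    intro x hx
    exact ih x (ha (a ^ n * x) (by rw [← hx]; ring))

/-- If `a` is a nonzerodivisor and `b` is regular mod `(a)`, then `b` is regular
mod `(a^m)`. -/
lemma aux_reg_mod_pow {a b : R} (ha : ∀ x : R, a * x = 0 → x = 0)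
    (hb : ∀ x : R, b * x ∈ Ideal.span {a} → x ∈ Ideal.span {a}) :
    ∀ (m : ℕ) (x : R), b * x ∈ Ideal.span {a ^ m} → x ∈ Ideal.span {a ^ m} := by
  intro m
  induction m with
  | zero => intro x _; simp [Ideal.span_singleton_one]
  | succ n ih =>
    intro x hx
    obtain ⟨y, hy⟩ := Ideal.mem_span_singleton'.mp hx
    have hbx : b * x = y * a ^ (n + 1) := hy.symm
    have hxa : x ∈ Ideal.span {a} := by
      apply hb
      exact Ideal.mem_span_singleton'.mpr ⟨y * a ^ n, by rw [← hy]; ring⟩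
    obtain ⟨x₁, hx₁⟩ := Ideal.mem_span_singleton'.mp hxa
    have key : a * (b * x₁ - y * a ^ n) = 0 := by
      linear_combination b * hx₁ + hbx
    have key2 : b * x₁ - y * a ^ n = 0 := ha _ key
    have hx1mem : x₁ ∈ Ideal.span {a ^ n} :=
      ih x₁ (Ideal.mem_span_singleton'.mpr ⟨y, by linear_combination -key2⟩)
    obtain ⟨z, hz⟩ := Ideal.mem_span_singleton'.mp hx1mem
    exact Ideal.mem_span_singleton'.mpr ⟨z, by rw [← hx₁, ← hz]; ring⟩

/-- Powers of an element regular mod an ideal are regular mod that ideal. -/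
lemma aux_reg_mul_pow {S : Ideal R} {b : R}
    (hb : ∀ x : R, b * x ∈ S → x ∈ S) :
    ∀ (n : ℕ) (x : R), b ^ n * x ∈ S → x ∈ S := by
  intro n
  induction n with
  | zero => intro x hx; simpa using hx
  | succ k ih =>
    intro x hx
    exact hb x (ih (b * x) (by rw [← mul_assoc, ← pow_succ]; exact hx))

/-- The core argument: if `A * B = ⊥`, `a` is a nonzerodivisor, `b` is regular
mod `(a)`, and `a, b ∈ A ⊔ B`, then in an indecomposable ring one of `A`, `B`
must be zero. -/
lemma aux_core (hind : ∀ A B : Submodule R R, IsCompl A B → A = ⊥ ∨ B = ⊥)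
    {A B : Ideal R} (hAB : A * B = ⊥) {a b : R}
    (ha : ∀ x : R, a * x = 0 → x = 0)
    (hb : ∀ x : R, b * x ∈ Ideal.span {a} → x ∈ Ideal.span {a})
    (haM : a ∈ A ⊔ B) (hbM : b ∈ A ⊔ B) : A = ⊥ ∨ B = ⊥ := by
  obtain ⟨α, hα, β, hβ, hab⟩ := Submodule.mem_sup.mp haM
  obtain ⟨γ, hγ, δ, hδ, hgd⟩ := Submodule.mem_sup.mp hbM
  have prodz : ∀ x ∈ A, ∀ y ∈ B, x * y = 0 := by
    intro x hx y hy
    have hm : x * y ∈ A * B := Ideal.mul_mem_mul hx hy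
    rwa [hAB, Ideal.mem_bot] at hm
  have had : α * δ = 0 := prodz _ hα _ hδ
  have hbg : γ * β = 0 := prodz _ hγ _ hβ
  have habz : α * β = 0 := prodz _ hα _ hβ
  have h1 : b * α = a * γ := by
    linear_combination (-α) * hgd + γ * hab + had - hbg
  have hα_mem : α ∈ Ideal.span {a} := hb α
    (Ideal.mem_span_singleton'.mpr ⟨γ, by linear_combination -h1⟩)
  have h2 : b * β = a * δ := by
    linear_combination (-β) * hgd + δ * hab + hbg - had
  have hβ_mem : β ∈ Ideal.span {a} := hb β
    (Ideal.mem_span_singleton'.mpr ⟨δ, by linear_combination -h2⟩)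
  obtain ⟨s, hs⟩ := Ideal.mem_span_singleton'.mp hα_mem
  obtain ⟨t, ht⟩ := Ideal.mem_span_singleton'.mp hβ_mem
  have hst1 : a * (s + t - 1) = 0 := by linear_combination hs + ht + hab
  have hst : s + t = 1 := by linear_combination ha _ hst1
  have hst0 : s * t = 0 := by
    have h4 : a * (a * (s * t)) = 0 := by
      linear_combination (t * a) * hs + α * ht + habz
    exact ha _ (ha _ h4)
  have hidem : s * s = s := by linear_combination s * hst - hst0
  rcases aux_idem hind hidem with h | h
  · left
    have hα0 : α = 0 := by rw [← hs, h]; ring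
    have haB : a ∈ B := by rw [← hab, hα0, zero_add]; exact hβ
    rw [eq_bot_iff]
    intro x hx
    exact (Submodule.mem_bot R).mpr (ha x (by rw [mul_comm]; exact prodz _ hx _ haB))
  · right
    have ht0 : t = 0 := by linear_combination hst0 - t * h
    have hβ0 : β = 0 := by rw [← ht, ht0]; ring
    have haA : a ∈ A := by rw [← hab, hβ0, add_zero]; exact hα
    rw [eq_bot_iff]
    intro x hx
    exact (Submodule.mem_bot R).mpr (ha x (prodz _ haA _ hx))

end Aux

/-- Kaplansky: if `R` is Noetherian and indecomposable as a module over itself and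
`I, J` are proper ideals with `√(I ∩ J) = √0` but `√I, √J ≠ √0`, then
`depth(I + J, R) ≤ 1`. -/
theorem depth_sup_le_one_of_radical_inf_eq_nilradical
    {R : Type u} [CommRing R] [IsNoetherianRing R]
    (hind : ∀ A B : Submodule R R, IsCompl A B → A = ⊥ ∨ B = ⊥)
    (I J : Ideal R) (hI : I ≠ ⊤) (hJ : J ≠ ⊤)
    (hmeet : (I ⊓ J).radical = (⊥ : Ideal R).radical)
    (hIr : I.radical ≠ (⊥ : Ideal R).radical)
    (hJr : J.radical ≠ (⊥ : Ideal R).radical) :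
    (I ⊔ J).depthENat R ≤ 1 := by
  obtain ⟨N₀, hN₀⟩ := IsNoetherianRing.isNilpotent_nilradical R
  have hNbot : nilradical R ^ (N₀ + 1) = ⊥ := by
    rw [eq_bot_iff]
    calc nilradical R ^ (N₀+1) ≤ nilradical R ^ N₀ := Ideal.pow_le_pow_right (Nat.le_succ N₀)
    _ = ⊥ := hN₀
  have hIJnil : I * J ≤ nilradical R := by
    refine le_trans Ideal.mul_le_inf (le_trans Ideal.le_radical ?_)
    rw [hmeet]; exact le_of_eq rfl
  have hAB : (I ^ (N₀+1)) * (J ^ (N₀+1)) = ⊥ := by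
    rw [eq_bot_iff, ← mul_pow, ← hNbot]
    exact pow_le_pow_left' hIJnil (N₀+1)
  have hradsup : (I ^ (N₀+1) ⊔ J ^ (N₀+1)).radical = (I ⊔ J).radical := by
    rw [Ideal.radical_sup, Ideal.radical_pow I (Nat.succ_ne_zero N₀),
      Ideal.radical_pow J (Nat.succ_ne_zero N₀), ← Ideal.radical_sup]
  -- The key consequence of the core lemma: no regular pair `a, b` inside `I ⊔ J`.
  have key : ∀ a b : R, (∀ x : R, a * x = 0 → x = 0) →
      (∀ x : R, b * x ∈ Ideal.span {a} → x ∈ Ideal.span {a}) →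
      a ∈ I ⊔ J → b ∈ I ⊔ J → False := by
    intro a b ha hb haK hbK
    have haR : a ∈ (I ^ (N₀+1) ⊔ J ^ (N₀+1)).radical := by
      rw [hradsup]; exact Ideal.le_radical haK
    have hbR : b ∈ (I ^ (N₀+1) ⊔ J ^ (N₀+1)).radical := by
      rw [hradsup]; exact Ideal.le_radical hbK
    obtain ⟨m, ham⟩ := Ideal.mem_radical_iff.mp haR
    obtain ⟨n, hbn⟩ := Ideal.mem_radical_iff.mp hbR
    have ham' : ∀ x : R, a ^ m * x = 0 → x = 0 := aux_reg_pow ha m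
    have hbn' : ∀ x : R, b ^ n * x ∈ Ideal.span {a ^ m} → x ∈ Ideal.span {a ^ m} :=
      aux_reg_mul_pow (aux_reg_mod_pow ha hb m) n
    rcases aux_core hind hAB ham' hbn' ham hbn with h | h
    · exact hIr (by rw [← Ideal.radical_pow I (Nat.succ_ne_zero N₀), h])
    · exact hJr (by rw [← Ideal.radical_pow J (Nat.succ_ne_zero N₀), h])
  rw [Ideal.depthENat]
  have hcond : ¬ ((I ⊔ J) • (⊤ : Submodule R R) = ⊤) := by
    rw [smul_eq_mul, Ideal.mul_top]
    intro htop
    have h1 : (1 : R) ∈ I ⊔ J := htop ▸ Submodule.mem_top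
    exact key 1 1 (fun x hx => by simpa using hx)
      (fun x _ => by simp [Ideal.span_singleton_one]) h1 h1
  rw [if_neg hcond]
  apply sSup_le
  rintro n ⟨rs, hmem, hreg, hlen⟩
  rw [← hlen]
  match rs, hmem, hreg with
  | [], _, _ => simp
  | [a], _, _ => simp
  | (a :: b :: rest), hmem, hreg =>
    exfalso
    have hw := hreg.toIsWeaklyRegular
    rw [RingTheory.Sequence.isWeaklyRegular_cons_iff] at hw
    obtain ⟨ha, hw2⟩ := hw
    rw [RingTheory.Sequence.isWeaklyRegular_cons_iff] at hw2
    obtain ⟨hb, -⟩ := hw2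
    have ha' : ∀ x : R, a * x = 0 → x = 0 := by
      intro x hx
      exact ha (show a • x = a • 0 by simpa [smul_eq_mul] using hx)
    have hspan : (a • (⊤ : Submodule R R)) = (Ideal.span {a} : Ideal R) := by
      rw [← Submodule.ideal_span_singleton_smul, smul_eq_mul, Ideal.mul_top]
    have hb' : ∀ x : R, b * x ∈ Ideal.span {a} → x ∈ Ideal.span {a} := by
      intro x hx
      have hq : b • (Submodule.Quotient.mk x : QuotSMulTop a R) = 0 := by
        rw [← Submodule.Quotient.mk_smul, Submodule.Quotient.mk_eq_zero, hspan]
        simpa [smul_eq_mul] using hx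
      have h0 : (Submodule.Quotient.mk x : QuotSMulTop a R) = 0 :=
        hb (by simpa using hq)
      rw [Submodule.Quotient.mk_eq_zero, hspan] at h0
      exact h0
    exact key a b ha' hb' (hmem a (by simp)) (hmem b (by simp))
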